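/- Let N ≥ 2, 0 < p < 1, 0 < q < p with 1 - 2p + q > 0, and let P be the Dandelion probability function on {0,1}^{N+1} with parameters α = log((p-q)/(1-2p+q)), α₀ = (N-1)·log((1-p)/p) + N·α, β = log(q/(p-q)) - α, Z = (1+exp α)^N + exp(α₀)·(1+exp(α+β))^N. For distinct non-central indices i, j ∈ {1,…,N}, let E[LᵢLⱼ] = Σ_{(l₀,…,l_N): lᵢ=1, lⱼ=1} P(l₀,…,l_N) and define the non-central correlation ρ_{ij} = (E[LᵢLⱼ] - p²)/(p(1-p)) and the central–non-central correlation ρ = (q - p²)/(p(1-p)). Then ρ_{ij} = ρ². -/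

import Mathlib

/-- The real value of a Bernoulli (default) indicator. -/
noncomputable def ind (b : Bool) : ℝ := if b then 1 else 0

lemma sum_constrained (N : ℕ) (i j : Fin N) (hij : i ≠ j) (t : ℝ) :
    ∑ f ∈ Finset.univ.filter (fun f : Fin N → Bool => f i = true ∧ f j = true),
      (∏ k : Fin N, (if f k = true then t else 1)) = t ^ 2 * (1 + t) ^ (N - 2) := by
  classical
  have hset : Finset.univ.filter (fun f : Fin N → Bool => f i = true ∧ f j = true)
      = Fintype.piFinset (fun k => if k = i ∨ k = j then {true} else Finset.univ) := by
    ext f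
    simp only [Finset.mem_filter, Finset.mem_univ, true_and, Fintype.mem_piFinset]
    constructor
    · rintro ⟨h1, h2⟩ k
      split_ifs with h
      · rcases h with rfl | rfl <;> simp [h1, h2]
      · simp
    · intro h
      constructor
      · have := h i; simp at this; exact this
      · have := h j; simp at this; exact this
  rw [hset]
  rw [← Finset.prod_univ_sum (fun k : Fin N => if k = i ∨ k = j then ({true} : Finset Bool) else Finset.univ) (fun _ b => if b = true then t else 1)]
  have hstep : ∀ k : Fin N,
      (∑ b ∈ (if k = i ∨ k = j then ({true} : Finset Bool) else Finset.univ),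
        (if b = true then t else 1)) = (if k = i ∨ k = j then t else 1 + t) := by
    intro k
    split_ifs with h
    · simp
    · simp [Fintype.sum_bool, add_comm]
  rw [Finset.prod_congr rfl (fun k _ => hstep k)]
  rw [← Finset.prod_filter_mul_prod_filter_not Finset.univ (fun k : Fin N => k = i ∨ k = j)]
  have hfil : (Finset.univ.filter (fun k : Fin N => k = i ∨ k = j)) = {i, j} := by
    ext k; simp [Finset.mem_insert]
  have hcard1 : (Finset.univ.filter (fun k : Fin N => k = i ∨ k = j)).card = 2 := by
    rw [hfil]; rw [Finset.card_insert_of_notMem (by simp [hij])]; simp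
  have hcard2 : (Finset.univ.filter (fun k : Fin N => ¬(k = i ∨ k = j))).card = N - 2 := by
    have := Finset.card_filter_add_card_filter_not
      (s := (Finset.univ : Finset (Fin N))) (fun k : Fin N => k = i ∨ k = j)
    simp only [Finset.card_univ, Fintype.card_fin] at this
    omega
  rw [Finset.prod_congr rfl (fun k hk => by
        rw [if_pos (Finset.mem_filter.mp hk).2]),
      Finset.prod_congr (rfl : (Finset.univ.filter (fun k : Fin N => ¬(k = i ∨ k = j))) = _)
        (fun k hk => by rw [if_neg (Finset.mem_filter.mp hk).2]),
      Finset.prod_const, Finset.prod_const, hcard1, hcard2]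

/-- In the Dandelion model, for distinct non-central indices `i, j` the correlation
`ρ_{ij} = (E[LᵢLⱼ] - p²)/(p(1-p))` between two non-central nodes equals the square
of the central–non-central correlation `ρ = (q - p²)/(p(1-p))`. -/
theorem dandelion_noncentral_correlation_sq (N : ℕ) (hN : 2 ≤ N) (p q : ℝ)
    (hp0 : 0 < p) (hp1 : p < 1) (hq0 : 0 < q) (hqp : q < p)
    (hpos : 1 - 2 * p + q > 0)
    (α α₀ β Z : ℝ)
    (hα : α = Real.log ((p - q) / (1 - 2 * p + q)))
    (hα₀ : α₀ = (N - 1 : ℝ) * Real.log ((1 - p) / p) + N * α)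
    (hβ : β = Real.log (q / (p - q)) - α)
    (hZ : Z = (1 + Real.exp α) ^ N + Real.exp α₀ * (1 + Real.exp (α + β)) ^ N)
    (i j : Fin N) (hij : i ≠ j)
    (ELiLj ρij ρ : ℝ)
    (hE : ELiLj = ∑ l ∈ Finset.univ.filter
        (fun l : Fin (N + 1) → Bool => l i.succ = true ∧ l j.succ = true),
        (1 / Z) * Real.exp (α₀ * ind (l 0) + α * (∑ k : Fin N, ind (l k.succ))
          + β * ind (l 0) * (∑ k : Fin N, ind (l k.succ))))
    (hρij : ρij = (ELiLj - p ^ 2) / (p * (1 - p)))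
    (hρ : ρ = (q - p ^ 2) / (p * (1 - p))) :
    ρij = ρ ^ 2 := by
  classical
  obtain ⟨m, rfl⟩ : ∃ m, N = m + 2 := ⟨N - 2, by omega⟩
  -- basic positivity
  have hs : (0:ℝ) < 1 - 2 * p + q := hpos
  have hpq : (0:ℝ) < p - q := by linarith
  have h1p : (0:ℝ) < 1 - p := by linarith
  -- exponential values
  have hA : Real.exp α = (p - q) / (1 - 2 * p + q) := by
    rw [hα, Real.exp_log (div_pos hpq hs)]
  have hB : Real.exp (α + β) = q / (p - q) := by
    rw [hβ]
    have : α + (Real.log (q / (p - q)) - α) = Real.log (q / (p - q)) := by ring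
    rw [this, Real.exp_log (div_pos hq0 hpq)]
  have hEA0 : Real.exp α₀ = ((1 - p) / p) ^ (m + 1) * ((p - q) / (1 - 2 * p + q)) ^ (m + 2) := by
    have h1 : (((m + 2 : ℕ) : ℝ) - 1) = ((m + 1 : ℕ) : ℝ) := by push_cast; ring
    rw [hα₀, h1, Real.exp_add, Real.exp_nat_mul, Real.exp_nat_mul,
      Real.exp_log (div_pos h1p hp0), hA]
  -- rewrite summand as a product
  have key : ∀ (l : Fin (m + 2 + 1) → Bool),
      Real.exp (α₀ * ind (l 0) + α * (∑ k : Fin (m + 2), ind (l k.succ))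
          + β * ind (l 0) * (∑ k : Fin (m + 2), ind (l k.succ)))
      = Real.exp (α₀ * ind (l 0)) *
          ∏ k : Fin (m + 2), (if l k.succ = true then Real.exp (α + β * ind (l 0)) else 1) := by
    intro l
    have h1 : α₀ * ind (l 0) + α * (∑ k : Fin (m + 2), ind (l k.succ))
          + β * ind (l 0) * (∑ k : Fin (m + 2), ind (l k.succ))
        = α₀ * ind (l 0) + ∑ k : Fin (m + 2), (α + β * ind (l 0)) * ind (l k.succ) := by
      rw [← Finset.mul_sum]; ring
    rw [h1, Real.exp_add, Real.exp_sum]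
    congr 1
    refine Finset.prod_congr rfl fun k _ => ?_
    cases hlk : l k.succ <;> simp [ind]
  -- compute the sum
  have hsum : ELiLj = (1 / Z) * (Real.exp α ^ 2 * (1 + Real.exp α) ^ m)
      + (1 / Z) * (Real.exp α₀ * (Real.exp (α + β) ^ 2 * (1 + Real.exp (α + β)) ^ m)) := by
    rw [hE]
    have hrw : ∀ l ∈ Finset.univ.filter
        (fun l : Fin (m + 2 + 1) → Bool => l i.succ = true ∧ l j.succ = true),
        (1 / Z) * Real.exp (α₀ * ind (l 0) + α * (∑ k : Fin (m + 2), ind (l k.succ))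
          + β * ind (l 0) * (∑ k : Fin (m + 2), ind (l k.succ)))
        = (1 / Z) * (Real.exp (α₀ * ind (l 0)) *
            ∏ k : Fin (m + 2), (if l k.succ = true then Real.exp (α + β * ind (l 0)) else 1)) := by
      intro l _; rw [key l]
    rw [Finset.sum_congr rfl hrw, Finset.sum_filter]
    rw [← Equiv.sum_comp (Fin.consEquiv (fun _ : Fin (m + 2 + 1) => Bool))]
    have hsymm : ∀ (b : Bool) (f : Fin (m + 2) → Bool),
        (Fin.consEquiv (fun _ : Fin (m + 2 + 1) => Bool)) (b, f) = Fin.cons b f := fun b f => rfl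
    rw [Fintype.sum_prod_type]
    have hinner : ∀ b : Bool,
        (∑ f : Fin (m + 2) → Bool,
          if ((Fin.consEquiv (fun _ : Fin (m + 2 + 1) => Bool)) (b, f)) i.succ = true
              ∧ ((Fin.consEquiv (fun _ : Fin (m + 2 + 1) => Bool)) (b, f)) j.succ = true then
            (1 / Z) * (Real.exp (α₀ * ind (((Fin.consEquiv (fun _ : Fin (m + 2 + 1) => Bool)) (b, f)) 0)) *
              ∏ k : Fin (m + 2), (if ((Fin.consEquiv (fun _ : Fin (m + 2 + 1) => Bool)) (b, f)) k.succ = true then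
                Real.exp (α + β * ind (((Fin.consEquiv (fun _ : Fin (m + 2 + 1) => Bool)) (b, f)) 0)) else 1))
          else 0)
        = (1 / Z) * (Real.exp (α₀ * ind b) *
            (Real.exp (α + β * ind b) ^ 2 * (1 + Real.exp (α + β * ind b)) ^ m)) := by
      intro b
      simp only [hsymm, Fin.cons_zero, Fin.cons_succ]
      rw [← Finset.sum_filter, ← Finset.mul_sum, ← Finset.mul_sum,
        sum_constrained (m + 2) i j hij (Real.exp (α + β * ind b))]
      norm_num
    rw [Finset.sum_congr rfl (fun b _ => hinner b)]
    rw [Fintype.sum_bool]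
    have ht : ind true = 1 := rfl
    have hf : ind false = 0 := rfl
    rw [ht, hf]
    simp only [mul_one, mul_zero, add_zero, Real.exp_zero, one_mul]
    ring
  -- algebraic evaluation
  have h1A : 1 + Real.exp α = (1 - p) / (1 - 2 * p + q) := by
    rw [hA, eq_div_iff hs.ne', add_mul, div_mul_cancel₀ _ hs.ne']; ring
  have h1B : 1 + Real.exp (α + β) = p / (p - q) := by
    rw [hB]; field_simp; ring
  have hZval : Z = (1 - p) ^ (m + 1) / (1 - 2 * p + q) ^ (m + 2) := by
    rw [hZ, h1A, h1B, hEA0, div_pow, div_pow, div_pow, div_pow]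
    rw [div_mul_div_comm, div_mul_div_comm, div_add_div _ _ (by positivity) (by positivity),
      div_eq_div_iff (by positivity) (by positivity)]
    ring
  have hZpos : 0 < Z := by rw [hZval]; positivity
  have hEval : ELiLj = ((p - q) ^ 2 * p + (1 - p) * q ^ 2) / (p * (1 - p)) := by
    rw [hsum, h1A, h1B, hA, hB, hEA0, hZval]
    rw [div_pow, div_pow, div_pow, div_pow, div_pow, div_pow]
    generalize hsd : 1 - 2 * p + q = s at *
    field_simp
    ring
  rw [hρij, hρ, hEval]
  have hne : p * (1 - p) ≠ 0 := by positivity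
  field_simp
  ring
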